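/- Let p : Fin d → ℝ be a probability vector (pᵢ ≥ 0, ∑ᵢ pᵢ = 1), define H = −∑ᵢ pᵢ log₂ pᵢ and α = √(∑ᵢ pᵢ (log₂ pᵢ + H)²) (with the convention 0·log₂0 = 0), and assume α > 0. Then there exist constants δ < 1, C > 0 and n₀ ∈ ℕ such that for all n ≥ n₀, every finite set T of multi-indices i : Fin n → Fin d satisfying ∑_{i∈T} ∏ₖ p(i k) ≥ δ has cardinality |T| > C · 2^{nH + α√n}. -/

import Mathlib

open scoped BigOperators Classical ComplexOrder

/-- A density matrix: positive semidefinite with trace one. -/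
def IsDensity {ι : Type*} [Fintype ι] [DecidableEq ι] (ρ : Matrix ι ι ℂ) : Prop :=
  ρ.PosSemidef ∧ ρ.trace = 1

/-- The trace distance `D(ρ,σ) = Tr|ρ−σ|`: the sum of the absolute values of the
eigenvalues of the Hermitian matrix `ρ − σ` (no factor 1/2). -/
noncomputable def traceDist {ι : Type*} [Fintype ι] [DecidableEq ι]
    (ρ σ : Matrix ι ι ℂ) : ℝ :=
  if h : (ρ - σ).IsHermitian then ∑ i, |h.eigenvalues i| else 0

/-- The minimal dimension `𝒮(ρ,δ)` of a `δ`-significant subspace: the minimum rank of an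
orthogonal projection `P` (`P = Pᴴ = P²`) with `Tr(Pρ) ≥ δ`. -/
noncomputable def sigDim {ι : Type*} [Fintype ι] [DecidableEq ι]
    (ρ : Matrix ι ι ℂ) (δ : ℝ) : ℕ :=
  sInf {m : ℕ | ∃ P : Matrix ι ι ℂ,
    P.IsHermitian ∧ P * P = P ∧ δ ≤ ((P * ρ).trace).re ∧ P.rank = m}

/-- The `n`-fold Kronecker power of `ρ`, indexed by `Fin n → ι`. -/
noncomputable def kronPow {ι : Type*} (ρ : Matrix ι ι ℂ) (n : ℕ) :
    Matrix (Fin n → ι) (Fin n → ι) ℂ :=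
  Matrix.of fun i j => ∏ k, ρ (i k) (j k)

/-- The rank-one matrix `|u⟩⟨u|`. -/
noncomputable def outer {ι : Type*} (u : ι → ℂ) : Matrix ι ι ℂ :=
  Matrix.of fun i j => u i * starRingEnd ℂ (u j)

/-- The partial trace over the second subsystem. -/
noncomputable def ptraceB {A B : Type*} [Fintype B]
    (M : Matrix (A × B) (A × B) ℂ) : Matrix A A ℂ :=
  Matrix.of fun a a' => ∑ b, M (a, b) (a', b)

set_option maxHeartbeats 1000000

section HPSauxSection

namespace HPSaux
open Real Finset
open Real Finset

lemma exp_le_one_add_sq {x : ℝ} (hx : |x| ≤ 1) : Real.exp x ≤ 1 + x + x ^ 2 := by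
  have h := Real.exp_bound hx (n := 2) (by norm_num)
  norm_num [Finset.sum_range_succ, Nat.factorial] at h
  have h2 := (abs_sub_le_iff.1 h).1
  nlinarith [sq_abs x, sq_nonneg x]

lemma exp_sub_sq_le {x : ℝ} (h0 : 0 ≤ x) (h1 : x ≤ 1) : Real.exp (x - x ^ 2) ≤ 1 + x := by
  have hy : |x - x ^ 2| ≤ 1 := by rw [abs_le]; constructor <;> nlinarith
  have h := exp_le_one_add_sq hy
  nlinarith [mul_nonneg (mul_nonneg (mul_nonneg h0 h0) h0) (by linarith : (0:ℝ) ≤ 2 - x)]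

lemma exp_le_three {x : ℝ} (h : x ≤ 1) : Real.exp x ≤ 3 := by
  have := Real.exp_one_lt_d9
  have h2 : Real.exp x ≤ Real.exp 1 := Real.exp_le_exp.2 h
  linarith

lemma tilt_lower_aux {a b τ : ℝ} (hb : 0 ≤ b) (hτ : 0 ≤ τ) (hab : b ≤ a) :
    τ * (a - b) ^ 2 ≤ (a - b) * (Real.exp (τ * a) - Real.exp (τ * b)) := by
  have h1 : Real.exp (τ * a) = Real.exp (τ * b) * Real.exp (τ * (a - b)) := by
    rw [← Real.exp_add]; ring_nf
  have h2 := Real.add_one_le_exp (τ * (a - b))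
  have h3 : (1 : ℝ) ≤ Real.exp (τ * b) := Real.one_le_exp (by positivity)
  have h4 : 0 ≤ a - b := by linarith
  have h5 : 0 ≤ τ * (a - b) := by positivity
  rw [h1]
  nlinarith [mul_nonneg h4 (by linarith : 0 ≤ Real.exp (τ * (a - b)) - 1 - τ * (a - b)),
    mul_nonneg (by linarith : (0:ℝ) ≤ Real.exp (τ * b) - 1)
      (mul_nonneg h4 (by linarith : 0 ≤ Real.exp (τ * (a - b)) - 1))]

lemma tilt_lower {a b τ : ℝ} (ha : 0 ≤ a) (hb : 0 ≤ b) (hτ : 0 ≤ τ) :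
    τ * (a - b) ^ 2 ≤ (a - b) * (Real.exp (τ * a) - Real.exp (τ * b)) := by
  rcases le_total b a with h | h
  · exact tilt_lower_aux hb hτ h
  · have := tilt_lower_aux ha hτ h
    nlinarith

lemma tilt_upper_aux {a b τ M : ℝ} (hb : 0 ≤ b) (haM : a ≤ M) (hbM : b ≤ M)
    (hτ : 0 ≤ τ) (hτM : τ * M ≤ 1) (hab : b ≤ a) :
    (a - b) * (Real.exp (τ * a) - Real.exp (τ * b)) ≤ 6 * τ * (a - b) ^ 2 := by
  have h1 : Real.exp (τ * a) = Real.exp (τ * b) * Real.exp (τ * (a - b)) := by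
    rw [← Real.exp_add]; ring_nf
  have hd0 : 0 ≤ a - b := by linarith
  have hτd : τ * (a - b) ≤ 1 := by nlinarith
  have hτd0 : 0 ≤ τ * (a - b) := by positivity
  have h2 : Real.exp (τ * (a - b)) ≤ 1 + τ * (a - b) + (τ * (a - b)) ^ 2 :=
    exp_le_one_add_sq (by rw [abs_le]; constructor <;> linarith)
  have h2' : Real.exp (τ * (a - b)) ≤ 1 + 2 * (τ * (a - b)) := by nlinarith
  have h3 : Real.exp (τ * b) ≤ 3 := exp_le_three (by nlinarith)
  have h3' : (0:ℝ) < Real.exp (τ * b) := Real.exp_pos _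
  have h6 : 1 ≤ Real.exp (τ * (a - b)) := Real.one_le_exp hτd0
  rw [h1]
  nlinarith [mul_nonneg (by linarith : (0:ℝ) ≤ 3 - Real.exp (τ * b))
      (mul_nonneg hd0 (by linarith : 0 ≤ Real.exp (τ * (a - b)) - 1)),
    mul_nonneg (mul_nonneg h3'.le hd0) (by linarith : 0 ≤ 1 + 2 * (τ * (a - b)) - Real.exp (τ * (a - b))),
    mul_nonneg hd0 hτd0]

lemma tilt_upper {a b τ M : ℝ} (ha : 0 ≤ a) (hb : 0 ≤ b) (haM : a ≤ M) (hbM : b ≤ M)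
    (hτ : 0 ≤ τ) (hτM : τ * M ≤ 1) :
    (a - b) * (Real.exp (τ * a) - Real.exp (τ * b)) ≤ 6 * τ * (a - b) ^ 2 := by
  rcases le_total b a with h | h
  · exact tilt_upper_aux hb haM hbM hτ hτM h
  · have := tilt_upper_aux ha hbM haM hτ hτM h
    nlinarith

lemma sum_prod_eq {n d : ℕ} (f : Fin n → Fin d → ℝ) :
    ∑ i : Fin n → Fin d, ∏ k, f k (i k) = ∏ k, ∑ j, f k j :=
  (Fintype.prod_sum f).symm
-- second-moment identity for product weights
lemma moment_identity {n d : ℕ} (w t : Fin d → ℝ)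
    (ht : ∑ j, w j * t j = 0) :
    ∑ i : Fin n → Fin d, (∏ k, w (i k)) * (∑ k, t (i k)) ^ 2
      = n * (∑ j, w j * t j ^ 2) * (∑ j, w j) ^ (n - 1) := by
  set Z := ∑ j, w j with hZ
  set V := ∑ j, w j * t j ^ 2 with hV
  have inner_eq : ∀ k l : Fin n,
      (∑ i : Fin n → Fin d, (∏ m, w (i m)) * (t (i k) * t (i l)))
        = if k = l then V * Z ^ (n - 1) else 0 := by
    intro k l
    have hterm : ∀ i : Fin n → Fin d,
        (∏ m, w (i m)) * (t (i k) * t (i l))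
          = ∏ m, (w (i m) * ((if k = m then t (i m) else 1) * (if l = m then t (i m) else 1))) := by
      intro i
      rw [Finset.prod_mul_distrib, Finset.prod_mul_distrib,
        Finset.prod_ite_eq univ k (fun m => t (i m)),
        Finset.prod_ite_eq univ l (fun m => t (i m))]
      simp
    calc (∑ i : Fin n → Fin d, (∏ m, w (i m)) * (t (i k) * t (i l)))
        = ∑ i : Fin n → Fin d, ∏ m, (w (i m) *
            ((if k = m then t (i m) else 1) * (if l = m then t (i m) else 1))) := by
          exact Finset.sum_congr rfl fun i _ => hterm i
      _ = ∏ m, ∑ j, (w j * ((if k = m then t j else 1) * (if l = m then t j else 1))) :=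
          sum_prod_eq (fun m j => w j * ((if k = m then t j else 1) * (if l = m then t j else 1)))
      _ = if k = l then V * Z ^ (n - 1) else 0 := by
          by_cases hkl : k = l
          · subst hkl
            simp only [if_pos rfl]
            have hfac : ∀ m : Fin n, (∑ j, (w j * ((if k = m then t j else 1) * (if k = m then t j else 1))))
                = if k = m then V else Z := by
              intro m
              by_cases hkm : k = m
              · simp only [if_pos hkm, hV]
                exact Finset.sum_congr rfl fun j _ => by ring
              · simp only [if_neg hkm, hZ]
                exact Finset.sum_congr rfl fun j _ => by ring
            rw [Finset.prod_congr rfl fun m _ => hfac m]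
            rw [← Finset.mul_prod_erase univ _ (Finset.mem_univ k), if_pos rfl]
            have : ∀ m ∈ univ.erase k, (if k = m then V else Z) = Z := by
              intro m hm
              exact if_neg fun h => (Finset.mem_erase.1 hm).1 h.symm
            rw [Finset.prod_congr rfl this, Finset.prod_const,
              Finset.card_erase_of_mem (Finset.mem_univ k), Finset.card_univ, Fintype.card_fin]
            simp
          · rw [if_neg hkl]
            apply Finset.prod_eq_zero (Finset.mem_univ k)
            have : ∀ j, (w j * ((if k = k then t j else 1) * (if l = k then t j else 1)))
                = w j * t j := by
              intro j
              rw [if_pos rfl, if_neg fun h => hkl h.symm]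
              ring
            rw [Finset.sum_congr rfl fun j _ => this j]
            exact ht
  calc ∑ i : Fin n → Fin d, (∏ k, w (i k)) * (∑ k, t (i k)) ^ 2
      = ∑ i : Fin n → Fin d, ∑ k, ∑ l, (∏ m, w (i m)) * (t (i k) * t (i l)) := by
        refine Finset.sum_congr rfl fun i _ => ?_
        rw [sq, Finset.sum_mul_sum]
        rw [Finset.mul_sum]
        refine Finset.sum_congr rfl fun k _ => ?_
        rw [Finset.mul_sum]
    _ = ∑ k : Fin n, ∑ l : Fin n, ∑ i : Fin n → Fin d, (∏ m, w (i m)) * (t (i k) * t (i l)) := by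
        rw [Finset.sum_comm]
        exact Finset.sum_congr rfl fun k _ => Finset.sum_comm
    _ = ∑ k : Fin n, ∑ l : Fin n, if k = l then V * Z ^ (n - 1) else 0 :=
        Finset.sum_congr rfl fun k _ => Finset.sum_congr rfl fun l _ => inner_eq k l
    _ = ∑ k : Fin n, V * Z ^ (n - 1) := by
        refine Finset.sum_congr rfl fun k _ => ?_
        rw [Finset.sum_ite_eq univ k fun _ => V * Z ^ (n - 1), if_pos (Finset.mem_univ k)]
    _ = n * V * Z ^ (n - 1) := by
        rw [Finset.sum_const, Finset.card_univ, Fintype.card_fin, nsmul_eq_mul]; ring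

theorem tail_lemma (d : ℕ) (p : Fin d → ℝ) (hp0 : ∀ i, 0 ≤ p i) (hp1 : ∑ i, p i = 1)
    (s : Fin d → ℝ) (hs0 : ∀ j, 0 ≤ s j)
    (H α M : ℝ) (hH : H = ∑ j, p j * s j) (hα2 : α ^ 2 = ∑ j, p j * (s j - H) ^ 2)
    (hαpos : 0 < α) (hM : M = 1 + ∑ j, s j)
    (n : ℕ) (hn : ((24 / α) * (M + α)) ^ 2 ≤ (n : ℝ)) :
    2 / 3 * Real.exp (-(3528 + 576 * H ^ 2 / α ^ 2))
      ≤ ∑ i ∈ Finset.univ.filter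
          (fun i : Fin n → Fin d => (n : ℝ) * H + α * Real.sqrt n ≤ ∑ k, s (i k)),
        ∏ k, p (i k) := by
  classical
  set c : ℝ := 24 / α with hc
  have hc0 : 0 < c := by positivity
  -- basic bounds
  have hple : ∀ j, p j ≤ 1 := by
    intro j
    calc p j ≤ ∑ i, p i := Finset.single_le_sum (fun i _ => hp0 i) (Finset.mem_univ j)
      _ = 1 := hp1
  have hMs : ∀ j, s j ≤ M := by
    intro j
    have : s j ≤ ∑ i, s i := Finset.single_le_sum (fun i _ => hs0 i) (Finset.mem_univ j)
    rw [hM]; linarith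
  have hM1 : 1 ≤ M := by
    rw [hM]
    have : 0 ≤ ∑ j, s j := Finset.sum_nonneg fun j _ => hs0 j
    linarith
  have hH0 : 0 ≤ H := by
    rw [hH]; exact Finset.sum_nonneg fun j _ => mul_nonneg (hp0 j) (hs0 j)
  have hHM : H ≤ M := by
    rw [hH, hM]
    have h1 : ∑ j, p j * s j ≤ ∑ j, s j :=
      Finset.sum_le_sum fun j _ => by nlinarith [hp0 j, hple j, hs0 j]
    linarith
  -- sqrt n
  set rn : ℝ := Real.sqrt n with hrn
  have hMα : (0:ℝ) ≤ c * (M + α) := mul_nonneg hc0.le (by linarith)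
  have hrn_ge : c * (M + α) ≤ rn := by
    rw [hrn]
    exact (Real.le_sqrt hMα (Nat.cast_nonneg n)).mpr hn
  have hrn0 : 0 < rn := lt_of_lt_of_le (by positivity) hrn_ge
  have hrnsq : rn ^ 2 = n := Real.sq_sqrt (Nat.cast_nonneg n)
  have hn1 : 1 ≤ n := by
    have h0 : (0:ℝ) < ((24 / α) * (M + α)) ^ 2 :=
      pow_pos (mul_pos (by positivity) (by linarith)) 2
    have h1 : (0:ℝ) < (n:ℝ) := lt_of_lt_of_le h0 hn
    have h2 : 0 < n := by exact_mod_cast h1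
    omega
  -- tilt parameter
  set τ : ℝ := c / rn with hτ
  have hτ0 : 0 < τ := by positivity
  have hτM : τ * M ≤ 1 := by
    rw [hτ, div_mul_eq_mul_div, div_le_one hrn0]
    have := mul_pos hc0 hαpos
    linarith
  have hτrn : τ * rn = c := div_mul_cancel₀ c hrn0.ne'
  have hnτ : (n : ℝ) * τ = c * rn := by
    have h : (n:ℝ) = rn * rn := by rw [← hrnsq]; ring
    rw [h, hτ]; field_simp
  have hτH1 : τ * H ≤ 1 := le_trans (mul_le_mul_of_nonneg_left hHM hτ0.le) hτM
  -- tilted weights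
  set w : Fin d → ℝ := fun j => p j * Real.exp (τ * s j) with hw
  have hw0 : ∀ j, 0 ≤ w j := fun j => mul_nonneg (hp0 j) (Real.exp_pos _).le
  set Z : ℝ := ∑ j, w j with hZ
  have hZ1 : 1 + τ * H ≤ Z := by
    rw [hZ, hw]
    have : ∀ j ∈ univ, p j * (1 + τ * s j) ≤ p j * Real.exp (τ * s j) := fun j _ =>
      mul_le_mul_of_nonneg_left (by
        have := Real.add_one_le_exp (τ * s j); linarith) (hp0 j)
    have h2 := Finset.sum_le_sum this
    have h3 : ∑ j, p j * (1 + τ * s j) = 1 + τ * H := by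
      have h4 : ∀ j ∈ univ, p j * (1 + τ * s j) = p j + τ * (p j * s j) := fun j _ => by ring
      rw [Finset.sum_congr rfl h4, Finset.sum_add_distrib, hp1, ← Finset.mul_sum, ← hH]
    linarith
  have hZ1' : 1 ≤ Z := by linarith [mul_nonneg hτ0.le hH0]
  have hZpos : 0 < Z := lt_of_lt_of_le one_pos hZ1'
  have hZ3 : Z ≤ 3 := by
    rw [hZ, hw]
    have : ∀ j ∈ univ, p j * Real.exp (τ * s j) ≤ p j * 3 := fun j _ =>
      mul_le_mul_of_nonneg_left (exp_le_three (le_trans (mul_le_mul_of_nonneg_left (hMs j) hτ0.le) hτM)) (hp0 j)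
    have h2 := Finset.sum_le_sum this
    have h3 : ∑ j, p j * 3 = 3 := by rw [← Finset.sum_mul, hp1, one_mul]
    linarith
  -- tilted mean
  set μ : ℝ := (∑ j, w j * s j) / Z with hμ
  have hμZ : ∑ j, w j * s j = μ * Z := by rw [hμ]; field_simp
  have hwu0 : ∑ j, w j * (s j - μ) = 0 := by
    have : ∑ j, w j * (s j - μ) = (∑ j, w j * s j) - μ * Z := by
      rw [hZ, Finset.mul_sum, ← Finset.sum_sub_distrib]
      exact Finset.sum_congr rfl fun j _ => by ring
    rw [this, hμZ]; ring
  -- numerator bounds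
  have hpusum : ∑ j, p j * (s j - H) = 0 := by
    have : ∑ j, p j * (s j - H) = (∑ j, p j * s j) - H * ∑ j, p j := by
      rw [Finset.mul_sum, ← Finset.sum_sub_distrib]
      exact Finset.sum_congr rfl fun j _ => by ring
    rw [this, hp1, ← hH]; ring
  have hexpand : ∑ j, w j * (s j - H)
      = ∑ j, p j * ((s j - H) * (Real.exp (τ * s j) - Real.exp (τ * H))) := by
    have h1 : ∀ j ∈ univ, p j * ((s j - H) * (Real.exp (τ * s j) - Real.exp (τ * H)))
        = w j * (s j - H) - Real.exp (τ * H) * (p j * (s j - H)) := fun j _ => by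
      rw [hw]; ring
    rw [Finset.sum_congr rfl h1, Finset.sum_sub_distrib, ← Finset.mul_sum, hpusum]
    ring
  have hkey_low : τ * α ^ 2 ≤ ∑ j, w j * (s j - H) := by
    rw [hexpand]
    have h1 : ∀ j ∈ univ, p j * (τ * (s j - H) ^ 2)
        ≤ p j * ((s j - H) * (Real.exp (τ * s j) - Real.exp (τ * H))) := fun j _ =>
      mul_le_mul_of_nonneg_left (tilt_lower (hs0 j) hH0 hτ0.le) (hp0 j)
    have h2 := Finset.sum_le_sum h1
    have h3 : ∑ j, p j * (τ * (s j - H) ^ 2) = τ * α ^ 2 := by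
      rw [hα2, Finset.mul_sum]
      exact Finset.sum_congr rfl fun j _ => by ring
    linarith
  have hkey_up : ∑ j, w j * (s j - H) ≤ 6 * τ * α ^ 2 := by
    rw [hexpand]
    have h1 : ∀ j ∈ univ, p j * ((s j - H) * (Real.exp (τ * s j) - Real.exp (τ * H)))
        ≤ p j * (6 * τ * (s j - H) ^ 2) := fun j _ =>
      mul_le_mul_of_nonneg_left (tilt_upper (hs0 j) hH0 (hMs j) hHM hτ0.le hτM) (hp0 j)
    have h2 := Finset.sum_le_sum h1
    have h3 : ∑ j, p j * (6 * τ * (s j - H) ^ 2) = 6 * τ * α ^ 2 := by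
      rw [hα2, Finset.mul_sum]
      exact Finset.sum_congr rfl fun j _ => by ring
    linarith
  have hwuH : ∑ j, w j * (s j - H) = (μ - H) * Z := by
    have : ∑ j, w j * (s j - H) = (∑ j, w j * s j) - H * Z := by
      rw [hZ, Finset.mul_sum, ← Finset.sum_sub_distrib]
      exact Finset.sum_congr rfl fun j _ => by ring
    rw [this, hμZ]; ring
  have hZprod : τ * α ^ 2 ≤ (μ - H) * Z := by rw [← hwuH]; exact hkey_low
  have hZprod' : (μ - H) * Z ≤ 6 * τ * α ^ 2 := by rw [← hwuH]; exact hkey_up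
  have hτα2 : 0 < τ * α ^ 2 := by positivity
  have hμH0 : 0 ≤ μ - H := by
    rcases le_or_gt 0 (μ - H) with h | h
    · exact h
    · exfalso; linarith [mul_neg_of_neg_of_pos h hZpos]
  have hμ_low : τ * α ^ 2 / 3 ≤ μ - H := by
    have h1 : (μ - H) * Z ≤ (μ - H) * 3 := mul_le_mul_of_nonneg_left hZ3 hμH0
    linarith
  have hμ_up : μ - H ≤ 6 * τ * α ^ 2 := by
    have h1 : (μ - H) * 1 ≤ (μ - H) * Z := mul_le_mul_of_nonneg_left hZ1' hμH0
    linarith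
  -- variance bound
  set V : ℝ := ∑ j, w j * (s j - μ) ^ 2 with hV
  have hV0 : 0 ≤ V := Finset.sum_nonneg fun j _ => mul_nonneg (hw0 j) (sq_nonneg _)
  have hV3 : V ≤ 3 * α ^ 2 := by
    have hident : V = (∑ j, w j * (s j - H) ^ 2) - Z * (μ - H) ^ 2 := by
      have h1 : ∀ j ∈ univ, w j * (s j - μ) ^ 2
          = w j * (s j - H) ^ 2 - (2 * (μ - H)) * (w j * (s j - H)) + (μ - H) ^ 2 * w j :=
        fun j _ => by ring
      rw [hV, Finset.sum_congr rfl h1, Finset.sum_add_distrib, Finset.sum_sub_distrib,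
        ← Finset.mul_sum, ← Finset.mul_sum, hwuH, ← hZ]
      ring
    have h2 : ∑ j, w j * (s j - H) ^ 2 ≤ 3 * α ^ 2 := by
      have h1 : ∀ j ∈ univ, w j * (s j - H) ^ 2 ≤ 3 * (p j * (s j - H) ^ 2) := by
        intro j _
        rw [hw]
        have he : Real.exp (τ * s j) ≤ 3 :=
          exp_le_three (le_trans (mul_le_mul_of_nonneg_left (hMs j) hτ0.le) hτM)
        calc p j * Real.exp (τ * s j) * (s j - H) ^ 2
            ≤ p j * 3 * (s j - H) ^ 2 :=
              mul_le_mul_of_nonneg_right (mul_le_mul_of_nonneg_left he (hp0 j)) (sq_nonneg _)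
          _ = 3 * (p j * (s j - H) ^ 2) := by ring
      have h2 := Finset.sum_le_sum h1
      have h3 : ∑ j, 3 * (p j * (s j - H) ^ 2) = 3 * α ^ 2 := by
        rw [hα2, Finset.mul_sum]
      linarith
    have h4 := mul_nonneg hZpos.le (sq_nonneg (μ - H))
    linarith
  -- product notation
  set Pp : (Fin n → Fin d) → ℝ := fun i => ∏ k, p (i k) with hPp
  set W : (Fin n → Fin d) → ℝ := fun i => ∏ k, w (i k) with hW
  set S : (Fin n → Fin d) → ℝ := fun i => ∑ k, s (i k) with hS
  have hW0 : ∀ i, 0 ≤ W i := fun i => Finset.prod_nonneg fun k _ => hw0 (i k)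
  have hWsum : ∑ i : Fin n → Fin d, W i = Z ^ n := by
    rw [hW]
    rw [sum_prod_eq (fun _ j => w j)]
    rw [Finset.prod_const, Finset.card_univ, Fintype.card_fin, hZ]
  have hPW : ∀ i, Pp i = W i * Real.exp (-(τ * S i)) := by
    intro i
    have h1 : W i = Pp i * Real.exp (τ * S i) := by
      simp only [hW, hPp, hS, hw]
      rw [Finset.mul_sum, Real.exp_sum, ← Finset.prod_mul_distrib]
    rw [h1, mul_assoc, ← Real.exp_add, add_neg_cancel, Real.exp_zero, mul_one]
  -- second moment / Chebyshev
  set θ : ℝ := (n : ℝ) * μ with hθ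
  have hmom : ∑ i : Fin n → Fin d, W i * (S i - θ) ^ 2 = n * V * Z ^ (n - 1) := by
    have h1 : ∀ i : Fin n → Fin d, S i - θ = ∑ k, (s (i k) - μ) := by
      intro i
      simp only [hS, hθ, Finset.sum_sub_distrib, Finset.sum_const, Finset.card_univ,
        Fintype.card_fin, nsmul_eq_mul]
    calc ∑ i : Fin n → Fin d, W i * (S i - θ) ^ 2
        = ∑ i : Fin n → Fin d, (∏ k, w (i k)) * (∑ k, (s (i k) - μ)) ^ 2 :=
          Finset.sum_congr rfl fun i _ => by rw [h1 i, hW]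
      _ = n * V * Z ^ (n - 1) := moment_identity w (fun j => s j - μ) hwu0
  set r : ℝ := 3 * α * rn with hr
  have hr0 : 0 < r := by positivity
  set Ebad : Finset (Fin n → Fin d) := univ.filter (fun i => ¬ |S i - θ| < r) with hEbad
  have hbad : ∑ i ∈ Ebad, W i ≤ Z ^ n / 3 := by
    have h1 : ∀ i ∈ Ebad, r ^ 2 * W i ≤ W i * (S i - θ) ^ 2 := by
      intro i hi
      have h2 : r ≤ |S i - θ| := not_lt.1 (Finset.mem_filter.1 hi).2
      have h3 : r ^ 2 ≤ (S i - θ) ^ 2 := by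
        rw [← sq_abs (S i - θ)]
        exact pow_le_pow_left₀ hr0.le h2 2
      calc r ^ 2 * W i ≤ (S i - θ) ^ 2 * W i := mul_le_mul_of_nonneg_right h3 (hW0 i)
        _ = W i * (S i - θ) ^ 2 := by ring
    have h4 : r ^ 2 * ∑ i ∈ Ebad, W i ≤ ∑ i ∈ Ebad, W i * (S i - θ) ^ 2 := by
      rw [Finset.mul_sum]
      exact Finset.sum_le_sum h1
    have h5 : ∑ i ∈ Ebad, W i * (S i - θ) ^ 2 ≤ ∑ i : Fin n → Fin d, W i * (S i - θ) ^ 2 :=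
      Finset.sum_le_sum_of_subset_of_nonneg (Finset.filter_subset _ _)
        fun i _ _ => mul_nonneg (hW0 i) (sq_nonneg _)
    have h6 : r ^ 2 = 9 * α ^ 2 * n := by
      rw [hr, ← hrnsq]; ring
    have h7 : (n : ℝ) * V * Z ^ (n - 1) ≤ (n : ℝ) * (3 * α ^ 2) * Z ^ (n - 1) :=
      mul_le_mul_of_nonneg_right
        (mul_le_mul_of_nonneg_left hV3 (Nat.cast_nonneg n)) (pow_nonneg hZpos.le _)
    have h8 : Z ^ (n - 1) ≤ Z ^ n := pow_le_pow_right₀ hZ1' (Nat.sub_le n 1)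
    have h9 : (n : ℝ) * (3 * α ^ 2) * Z ^ (n - 1) ≤ r ^ 2 * (Z ^ n / 3) := by
      rw [h6]
      have : 9 * α ^ 2 * (n : ℝ) * (Z ^ n / 3) = (n : ℝ) * (3 * α ^ 2) * Z ^ n := by ring
      rw [this]
      exact mul_le_mul_of_nonneg_left h8 (by positivity)
    have h10 : r ^ 2 * ∑ i ∈ Ebad, W i ≤ r ^ 2 * (Z ^ n / 3) := by
      calc r ^ 2 * ∑ i ∈ Ebad, W i ≤ ∑ i : Fin n → Fin d, W i * (S i - θ) ^ 2 :=
            le_trans h4 h5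
        _ = n * V * Z ^ (n - 1) := hmom
        _ ≤ r ^ 2 * (Z ^ n / 3) := le_trans h7 h9
    exact le_of_mul_le_mul_left h10 (by positivity)
  set Egood : Finset (Fin n → Fin d) := univ.filter (fun i => |S i - θ| < r) with hEgood
  have hgood : 2 / 3 * Z ^ n ≤ ∑ i ∈ Egood, W i := by
    have hsplit := Finset.sum_filter_add_sum_filter_not univ (fun i => |S i - θ| < r) W
    rw [← hEgood, ← hEbad] at hsplit
    have : ∑ i : Fin n → Fin d, W i = Z ^ n := hWsum
    linarith
  -- location of θ
  have hcα : c * α ^ 2 = 24 * α := by rw [hc]; field_simp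
  have hθnH : θ - (n : ℝ) * H = (n : ℝ) * (μ - H) := by rw [hθ]; ring
  have hθlow : (n : ℝ) * H + 8 * (α * rn) ≤ θ := by
    have h1 : (n : ℝ) * (τ * α ^ 2 / 3) ≤ (n : ℝ) * (μ - H) :=
      mul_le_mul_of_nonneg_left hμ_low (Nat.cast_nonneg n)
    have h2 : (n : ℝ) * (τ * α ^ 2 / 3) = 8 * (α * rn) := by
      have h3 : (n : ℝ) * (τ * α ^ 2 / 3) = ((n : ℝ) * τ) * α ^ 2 / 3 := by ring
      rw [h3, hnτ]
      have h4 : c * rn * α ^ 2 = (c * α ^ 2) * rn := by ring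
      rw [h4, hcα]; ring
    linarith
  have hθup : θ ≤ (n : ℝ) * H + 144 * (α * rn) := by
    have h1 : (n : ℝ) * (μ - H) ≤ (n : ℝ) * (6 * τ * α ^ 2) :=
      mul_le_mul_of_nonneg_left hμ_up (Nat.cast_nonneg n)
    have h2 : (n : ℝ) * (6 * τ * α ^ 2) = 144 * (α * rn) := by
      have h3 : (n : ℝ) * (6 * τ * α ^ 2) = 6 * (((n : ℝ) * τ) * α ^ 2) := by ring
      rw [h3, hnτ]
      have h4 : c * rn * α ^ 2 = (c * α ^ 2) * rn := by ring
      rw [h4, hcα]; ring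
    linarith
  -- pointwise bounds on the good event
  have hSgood_low : ∀ i ∈ Egood, (n : ℝ) * H + α * rn ≤ S i := by
    intro i hi
    have h1 : |S i - θ| < r := (Finset.mem_filter.1 hi).2
    have h2 : θ - r ≤ S i := by
      have := abs_lt.1 h1
      linarith [this.1]
    rw [hr] at h2
    have hαrn : 0 < α * rn := mul_pos hαpos hrn0
    linarith
  have hSgood_up : ∀ i ∈ Egood, S i ≤ (n : ℝ) * H + 147 * (α * rn) := by
    intro i hi
    have h1 : |S i - θ| < r := (Finset.mem_filter.1 hi).2
    have h2 : S i ≤ θ + r := by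
      have := abs_lt.1 h1
      linarith [this.2]
    rw [hr] at h2
    linarith
  -- change of measure
  have h24 : τ * (α * rn) = 24 := by
    have : τ * (α * rn) = α * (τ * rn) := by ring
    rw [this, hτrn, hc]
    field_simp
  have hPlow : ∀ i ∈ Egood, Real.exp (-(τ * ((n : ℝ) * H)) + -3528) * W i ≤ Pp i := by
    intro i hi
    rw [hPW i, mul_comm (W i)]
    apply mul_le_mul_of_nonneg_right _ (hW0 i)
    apply Real.exp_le_exp.2
    have h1 : τ * S i ≤ τ * ((n : ℝ) * H + 147 * (α * rn)) :=
      mul_le_mul_of_nonneg_left (hSgood_up i hi) hτ0.le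
    have h2 : τ * ((n : ℝ) * H + 147 * (α * rn)) = τ * ((n : ℝ) * H) + 147 * (τ * (α * rn)) := by
      ring
    rw [h2, h24] at h1
    linarith
  have hZn_low : Real.exp ((n : ℝ) * (τ * H - (τ * H) ^ 2)) ≤ Z ^ n := by
    have h1 : Real.exp (τ * H - (τ * H) ^ 2) ≤ Z :=
      le_trans (exp_sub_sq_le (mul_nonneg hτ0.le hH0) hτH1) (by linarith [hZ1])
    calc Real.exp ((n : ℝ) * (τ * H - (τ * H) ^ 2))
        = Real.exp (τ * H - (τ * H) ^ 2) ^ n := Real.exp_nat_mul _ n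
      _ ≤ Z ^ n := pow_le_pow_left₀ (Real.exp_pos _).le h1 n
  have hnτ2 : (n : ℝ) * τ ^ 2 = c ^ 2 := by
    have h1 : (n : ℝ) * τ ^ 2 = ((n : ℝ) * τ) * τ := by ring
    rw [h1, hnτ, hτ]
    field_simp
  have hc2 : c ^ 2 = 576 / α ^ 2 := by rw [hc, div_pow]; norm_num
  have hexpo : (n : ℝ) * (τ * H - (τ * H) ^ 2) = τ * ((n : ℝ) * H) - 576 / α ^ 2 * H ^ 2 := by
    have h1 : (n : ℝ) * (τ * H) ^ 2 = ((n : ℝ) * τ ^ 2) * H ^ 2 := by ring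
    have h2 : (n : ℝ) * (τ * H - (τ * H) ^ 2)
        = τ * ((n : ℝ) * H) - (n : ℝ) * (τ * H) ^ 2 := by ring
    rw [h2, h1, hnτ2, hc2]
  -- assemble
  have hfinal : 2 / 3 * Real.exp (-(3528 + 576 * H ^ 2 / α ^ 2)) ≤ ∑ i ∈ Egood, Pp i := by
    have h1 : Real.exp (-(τ * ((n : ℝ) * H)) + -3528) * (2 / 3 * Z ^ n)
        ≤ ∑ i ∈ Egood, Pp i := by
      calc Real.exp (-(τ * ((n : ℝ) * H)) + -3528) * (2 / 3 * Z ^ n)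
          ≤ Real.exp (-(τ * ((n : ℝ) * H)) + -3528) * ∑ i ∈ Egood, W i :=
            mul_le_mul_of_nonneg_left hgood (Real.exp_pos _).le
        _ = ∑ i ∈ Egood, Real.exp (-(τ * ((n : ℝ) * H)) + -3528) * W i := Finset.mul_sum _ _ _
        _ ≤ ∑ i ∈ Egood, Pp i := Finset.sum_le_sum hPlow
    have h2 : 2 / 3 * Real.exp (-(3528 + 576 * H ^ 2 / α ^ 2))
        ≤ Real.exp (-(τ * ((n : ℝ) * H)) + -3528) * (2 / 3 * Z ^ n) := by
      calc 2 / 3 * Real.exp (-(3528 + 576 * H ^ 2 / α ^ 2))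
          = 2 / 3 * (Real.exp (-(τ * ((n : ℝ) * H)) + -3528)
              * Real.exp (τ * ((n : ℝ) * H) - 576 / α ^ 2 * H ^ 2)) := by
            rw [← Real.exp_add]
            congr 2
            ring
        _ = Real.exp (-(τ * ((n : ℝ) * H)) + -3528)
              * (2 / 3 * Real.exp ((n : ℝ) * (τ * H - (τ * H) ^ 2))) := by
            rw [hexpo]; ring
        _ ≤ Real.exp (-(τ * ((n : ℝ) * H)) + -3528) * (2 / 3 * Z ^ n) := by
            apply mul_le_mul_of_nonneg_left _ (Real.exp_pos _).le
            linarith [hZn_low]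
    linarith
  -- the good event is inside the target event
  have hsub : Egood ⊆ Finset.univ.filter
      (fun i : Fin n → Fin d => (n : ℝ) * H + α * rn ≤ ∑ k, s (i k)) := by
    intro i hi
    refine Finset.mem_filter.2 ⟨Finset.mem_univ i, ?_⟩
    have := hSgood_low i hi
    simpa [hS] using this
  calc 2 / 3 * Real.exp (-(3528 + 576 * H ^ 2 / α ^ 2)) ≤ ∑ i ∈ Egood, Pp i := hfinal
    _ ≤ ∑ i ∈ Finset.univ.filter
          (fun i : Fin n → Fin d => (n : ℝ) * H + α * rn ≤ ∑ k, s (i k)), Pp i :=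
        Finset.sum_le_sum_of_subset_of_nonneg hsub
          fun i _ _ => Finset.prod_nonneg fun k _ => hp0 (i k)
    _ = ∑ i ∈ Finset.univ.filter
          (fun i : Fin n → Fin d => (n : ℝ) * H + α * rn ≤ ∑ k, s (i k)),
          ∏ k, p (i k) := rfl

end HPSaux

end HPSauxSection

/-- classical analog: for a probability vector `p` with entropy `H` and spectral
deviation `α > 0`, there exist `δ < 1`, `C > 0` and `n₀` such that for all `n ≥ n₀`, any set `T`
of multi-indices carrying product probability at least `δ` has `|T| > C · 2^{nH + α√n}`. -/
theorem high_probability_set_lower_bound (d : ℕ) (hd : 0 < d)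
    (p : Fin d → ℝ) (hp0 : ∀ i, 0 ≤ p i) (hp1 : ∑ i, p i = 1)
    (H α : ℝ)
    (hH : H = -∑ i, p i * Real.logb 2 (p i))
    (hα : α = Real.sqrt (∑ i, p i * (Real.logb 2 (p i) + H) ^ 2))
    (hαpos : 0 < α) :
    ∃ δ C : ℝ, ∃ n₀ : ℕ, δ < 1 ∧ 0 < C ∧
      ∀ n : ℕ, n₀ ≤ n →
        ∀ T : Finset (Fin n → Fin d),
          δ ≤ ∑ i ∈ T, ∏ k, p (i k) →
          C * (2 : ℝ) ^ ((n : ℝ) * H + α * Real.sqrt n) < (T.card : ℝ) := by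
  classical
  have hple : ∀ j, p j ≤ 1 := by
    intro j
    calc p j ≤ ∑ i, p i := Finset.single_le_sum (fun i _ => hp0 i) (Finset.mem_univ j)
      _ = 1 := hp1
  set s : Fin d → ℝ := fun j => -Real.logb 2 (p j) with hsdef
  have hs0 : ∀ j, 0 ≤ s j := by
    intro j
    have h1 : Real.logb 2 (p j) ≤ 0 := Real.logb_nonpos (by norm_num) (hp0 j) (hple j)
    simp only [hsdef]
    linarith
  have hH' : H = ∑ j, p j * s j := by
    rw [hH, ← Finset.sum_neg_distrib]
    exact Finset.sum_congr rfl fun j _ => by simp only [hsdef]; ring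
  have hα2 : α ^ 2 = ∑ j, p j * (s j - H) ^ 2 := by
    have hX0 : 0 ≤ ∑ i, p i * (Real.logb 2 (p i) + H) ^ 2 :=
      Finset.sum_nonneg fun i _ => mul_nonneg (hp0 i) (sq_nonneg _)
    rw [hα, Real.sq_sqrt hX0]
    refine Finset.sum_congr rfl fun j _ => ?_
    have h1 : Real.logb 2 (p j) + H = -(s j - H) := by simp only [hsdef]; ring
    rw [h1, neg_sq]
  set M : ℝ := 1 + ∑ j, s j with hMdef
  set γ : ℝ := 2 / 3 * Real.exp (-(3528 + 576 * H ^ 2 / α ^ 2)) with hγ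
  have hγ0 : 0 < γ := by positivity
  have hγ1 : γ < 1 := by
    have h1 : Real.exp (-(3528 + 576 * H ^ 2 / α ^ 2)) ≤ 1 := by
      apply Real.exp_le_one_iff.2
      have : 0 ≤ 576 * H ^ 2 / α ^ 2 := by positivity
      linarith
    rw [hγ]
    linarith
  refine ⟨1 - γ / 2, γ / 4, ⌈((24 / α) * (M + α)) ^ 2⌉₊, by linarith, by positivity, ?_⟩
  intro n hn T hT
  have hnR : ((24 / α) * (M + α)) ^ 2 ≤ (n : ℝ) :=
    le_trans (Nat.le_ceil _) (by exact_mod_cast hn)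
  have htail := HPSaux.tail_lemma d p hp0 hp1 s hs0 H α M hH' hα2 hαpos hMdef n hnR
  set A : Finset (Fin n → Fin d) := Finset.univ.filter
    (fun i : Fin n → Fin d => (n : ℝ) * H + α * Real.sqrt n ≤ ∑ k, s (i k)) with hA
  set t : ℝ := (n : ℝ) * H + α * Real.sqrt n with ht
  have hPp0 : ∀ i : Fin n → Fin d, 0 ≤ ∏ k, p (i k) :=
    fun i => Finset.prod_nonneg fun k _ => hp0 (i k)
  -- split T
  have hsplit : ∑ i ∈ T ∩ A, (∏ k, p (i k)) + ∑ i ∈ T \ A, (∏ k, p (i k))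
      = ∑ i ∈ T, (∏ k, p (i k)) := Finset.sum_inter_add_sum_sdiff T A _
  have hTA : ∑ i ∈ T \ A, (∏ k, p (i k)) ≤ ∑ i ∈ Finset.univ \ A, (∏ k, p (i k)) :=
    Finset.sum_le_sum_of_subset_of_nonneg
      (Finset.sdiff_subset_sdiff (Finset.subset_univ T) (Finset.Subset.refl A))
      fun i _ _ => hPp0 i
  have hunivsum : ∑ i : Fin n → Fin d, (∏ k, p (i k)) = 1 := by
    rw [HPSaux.sum_prod_eq (fun _ j => p j), hp1]
    simp
  have hunivA : ∑ i ∈ Finset.univ \ A, (∏ k, p (i k))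
      = 1 - ∑ i ∈ A, (∏ k, p (i k)) := by
    have h1 := Finset.sum_sdiff (f := fun i : Fin n → Fin d => ∏ k, p (i k))
      (Finset.subset_univ A)
    rw [hunivsum] at h1
    linarith
  have hTAin : γ / 2 ≤ ∑ i ∈ T ∩ A, ∏ k, p (i k) := by linarith
  -- pointwise bound on A
  have hpt : ∀ i ∈ A, (∏ k, p (i k)) ≤ (2 : ℝ) ^ (-t) := by
    intro i hi
    have hSi : t ≤ ∑ k, s (i k) := (Finset.mem_filter.1 hi).2
    by_cases hz : ∀ k, p (i k) ≠ 0
    · have hpos : 0 < ∏ k, p (i k) :=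
        Finset.prod_pos fun k _ => (hp0 (i k)).lt_of_ne (Ne.symm (hz k))
      have hlogb : Real.logb 2 (∏ k, p (i k)) = ∑ k, Real.logb 2 (p (i k)) :=
        Real.logb_prod Finset.univ _ fun k _ => hz k
      have hlogb2 : Real.logb 2 (∏ k, p (i k)) ≤ -t := by
        rw [hlogb]
        have h2 : ∑ k, Real.logb 2 (p (i k)) = -∑ k, s (i k) := by
          rw [← Finset.sum_neg_distrib]
          exact Finset.sum_congr rfl fun k _ => by simp only [hsdef]; ring
        linarith
      calc (∏ k, p (i k)) = (2 : ℝ) ^ (Real.logb 2 (∏ k, p (i k))) :=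
            (Real.rpow_logb (by norm_num) (by norm_num) hpos).symm
        _ ≤ (2 : ℝ) ^ (-t) := Real.rpow_le_rpow_of_exponent_le (by norm_num) hlogb2
    · push_neg at hz
      obtain ⟨k, hk⟩ := hz
      have h0 : (∏ k, p (i k)) = 0 := Finset.prod_eq_zero (Finset.mem_univ k) hk
      rw [h0]
      positivity
  have hcard : γ / 2 ≤ ((T ∩ A).card : ℝ) * (2 : ℝ) ^ (-t) := by
    refine le_trans hTAin ?_
    calc ∑ i ∈ T ∩ A, ∏ k, p (i k) ≤ ∑ _i ∈ T ∩ A, (2 : ℝ) ^ (-t) :=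
          Finset.sum_le_sum fun i hi => hpt i (Finset.mem_of_mem_inter_right hi)
      _ = ((T ∩ A).card : ℝ) * (2 : ℝ) ^ (-t) := by
          rw [Finset.sum_const, nsmul_eq_mul]
  have h2t : (0 : ℝ) < (2 : ℝ) ^ t := Real.rpow_pos_of_pos (by norm_num) t
  have hcard2 : γ / 2 * (2 : ℝ) ^ t ≤ ((T ∩ A).card : ℝ) := by
    rw [Real.rpow_neg (by norm_num : (0:ℝ) ≤ 2) t] at hcard
    have h3 := mul_le_mul_of_nonneg_right hcard h2t.le
    rwa [mul_assoc, inv_mul_cancel₀ h2t.ne', mul_one] at h3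
  have hTcard : ((T ∩ A).card : ℝ) ≤ (T.card : ℝ) := by
    exact_mod_cast Finset.card_le_card Finset.inter_subset_left
  calc γ / 4 * (2 : ℝ) ^ t < γ / 2 * (2 : ℝ) ^ t :=
        mul_lt_mul_of_pos_right (by linarith) h2t
    _ ≤ (T.card : ℝ) := le_trans hcard2 hTcard
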